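/- Let G be a vertex-minimal graph admitting no odd 4-coloring. Then G contains no path v1v2v3v4v5 such that deg(v1) is odd and deg(v2) = deg(v4) = deg(v5) = 2. -/

import Mathlib

/-- An odd coloring of a graph: a proper coloring such that every non-isolated vertex
has some color appearing an odd number of times in its neighborhood. -/
def IsOddColoring {V α : Type*} (G : SimpleGraph V) (φ : V → α) : Prop :=
  (∀ u v : V, G.Adj u v → φ u ≠ φ v) ∧
  ∀ v : V, (∃ u, G.Adj v u) → ∃ c : α, Odd {u : V | G.Adj v u ∧ φ u = c}.ncard

private lemma fin4_exists (x y z : Fin 4) : ∃ c : Fin 4, c ≠ x ∧ c ≠ y ∧ c ≠ z := by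
  revert x y z; decide

private lemma fin4_two (p q : Fin 4) (h : p ≠ q) :
    ∃ a b : Fin 4, a ≠ b ∧ a ≠ p ∧ a ≠ q ∧ b ≠ p ∧ b ≠ q := by
  revert h; revert q; revert p; decide

private lemma set_pair {V : Type} [Fintype V] (S : Set V) (a b : V) (ha : a ∈ S)
    (hb : b ∈ S) (hab : a ≠ b) (h2 : S.ncard = 2) : S = {a, b} := by
  have hsub : ({a, b} : Set V) ⊆ S := by rintro x (rfl | rfl) <;> assumption
  have hle : S.ncard ≤ ({a, b} : Set V).ncard := by rw [h2, Set.ncard_pair hab]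
  exact (Set.eq_of_subset_of_ncard_le hsub hle (Set.toFinite S)).symm

private lemma odd_degree_exists {V : Type} [Fintype V] (G : SimpleGraph V) (ψ : V → Fin 4)
    (v : V) (h : Odd (G.neighborSet v).ncard) :
    ∃ c : Fin 4, Odd {u : V | G.Adj v u ∧ ψ u = c}.ncard := by
  classical
  by_contra hc
  push_neg at hc
  have hset : G.neighborSet v = ↑(Finset.univ.filter (fun u => G.Adj v u)) := by
    ext u; simp [SimpleGraph.mem_neighborSet]
  have hfib : ∀ c : Fin 4, {u : V | G.Adj v u ∧ ψ u = c}
      = ↑((Finset.univ.filter (fun u => G.Adj v u)).filter (fun u => ψ u = c)) := by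
    intro c; ext u; simp
  have hsum : (Finset.univ.filter (fun u => G.Adj v u)).card
      = ∑ c : Fin 4, ((Finset.univ.filter (fun u => G.Adj v u)).filter
          (fun u => ψ u = c)).card :=
    Finset.card_eq_sum_card_fiberwise (fun x _ => Finset.mem_univ (ψ x))
  have heven : Even (G.neighborSet v).ncard := by
    rw [hset, Set.ncard_coe_finset, hsum]
    refine Finset.even_sum _ ?_
    intro c _
    have h' := hc c
    rw [hfib c, Set.ncard_coe_finset] at h'
    exact Nat.not_odd_iff_even.mp h'
  exact (Nat.not_odd_iff_even.mpr heven) h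

private lemma two_nbrs {W : Type} (H : SimpleGraph W) (φ : W → Fin 4)
    (hφ : IsOddColoring H φ) (v a b : W) (hva : H.Adj v a) (hvb : H.Adj v b)
    (hab : a ≠ b) (hN : ∀ y, H.Adj v y → y = a ∨ y = b) : φ a ≠ φ b := by
  intro heq
  obtain ⟨c, hc⟩ := hφ.2 v ⟨a, hva⟩
  by_cases hca : c = φ a
  · have hS : {u | H.Adj v u ∧ φ u = c} = {a, b} := by
      ext u
      simp only [Set.mem_setOf_eq, Set.mem_insert_iff, Set.mem_singleton_iff]
      constructor
      · rintro ⟨h1, _⟩; exact hN u h1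
      · rintro (rfl | rfl)
        · exact ⟨hva, hca.symm⟩
        · exact ⟨hvb, by rw [← heq, hca]⟩
    rw [hS, Set.ncard_pair hab] at hc
    exact (by decide : ¬ Odd 2) hc
  · have hcb : c ≠ φ b := by rw [← heq]; exact hca
    have hS : {u | H.Adj v u ∧ φ u = c} = ∅ := by
      ext u
      simp only [Set.mem_setOf_eq, Set.mem_empty_iff_false, iff_false, not_and]
      intro h1 h2
      rcases hN u h1 with rfl | rfl
      · exact hca h2.symm
      · exact hcb h2.symm
    rw [hS, Set.ncard_empty] at hc
    exact (by decide : ¬ Odd 0) hc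

private lemma transfer_ncard {V W : Type} (G : SimpleGraph V) (H : SimpleGraph W)
    (f : W → V) (hf : Function.Injective f) (φ : W → Fin 4) (φ' : V → Fin 4)
    (v : V) (v' : W)
    (hadj : ∀ y : W, H.Adj v' y ↔ G.Adj v (f y))
    (hcol : ∀ y : W, G.Adj v (f y) → φ' (f y) = φ y)
    (hsurj : ∀ x : V, G.Adj v x → ∃ y : W, f y = x) (c : Fin 4) :
    {x : V | G.Adj v x ∧ φ' x = c}.ncard = {y : W | H.Adj v' y ∧ φ y = c}.ncard := by
  have him : {x : V | G.Adj v x ∧ φ' x = c} = f '' {y : W | H.Adj v' y ∧ φ y = c} := by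
    ext x
    constructor
    · rintro ⟨hx1, hx2⟩
      obtain ⟨y, rfl⟩ := hsurj x hx1
      exact ⟨y, ⟨(hadj y).mpr hx1, by rw [← hcol y hx1]; exact hx2⟩, rfl⟩
    · rintro ⟨y, ⟨hy1, hy2⟩, rfl⟩
      have h := (hadj y).mp hy1
      exact ⟨h, by rw [hcol y h]; exact hy2⟩
  rw [him, Set.ncard_image_of_injective _ hf]

private def pathH {V : Type} (G : SimpleGraph V) (v3 v4 v5 : V) (h35 : v3 ≠ v5) :
    SimpleGraph {x : V // x ≠ v4} where
  Adj a b := G.Adj a.1 b.1 ∨ (a.1 = v3 ∧ b.1 = v5) ∨ (a.1 = v5 ∧ b.1 = v3)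
  symm := by
    constructor
    rintro a b (h | ⟨h1, h2⟩ | ⟨h1, h2⟩)
    · exact Or.inl h.symm
    · exact Or.inr (Or.inr ⟨h2, h1⟩)
    · exact Or.inr (Or.inl ⟨h2, h1⟩)
  loopless := by
    constructor
    rintro a (h | ⟨h1, h2⟩ | ⟨h1, h2⟩)
    · exact G.irrefl h
    · exact h35 (h1.symm.trans h2)
    · exact h35 (h2.symm.trans h1)

private lemma pathH_adj {V : Type} (G : SimpleGraph V) (v3 v4 v5 : V) (h35 : v3 ≠ v5)
    (a b : {x : V // x ≠ v4}) :
    (pathH G v3 v4 v5 h35).Adj a b ↔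
      (G.Adj a.1 b.1 ∨ (a.1 = v3 ∧ b.1 = v5) ∨ (a.1 = v5 ∧ b.1 = v3)) := Iff.rfl

/-- A vertex-minimal graph admitting no odd 4-coloring, in which no
odd-degree vertex anchors a thread of two or more consecutive degree-2 vertices,
contains no path `v1v2v3v4v5` with `deg(v1)` odd and `deg(v2) = deg(v4) = deg(v5) = 2`. -/
theorem minimal_no_odd4_no_special_path
    {V : Type} [Fintype V] (G : SimpleGraph V)
    (hno : ¬ ∃ φ : V → Fin 4, IsOddColoring G φ)
    (hmin : ∀ (W : Type) [Fintype W] (H : SimpleGraph W),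
      Fintype.card W < Fintype.card V → ∃ φ : W → Fin 4, IsOddColoring H φ)
    (hanchor : ¬ ∃ u x y : V, Odd (G.neighborSet u).ncard ∧
      3 ≤ (G.neighborSet u).ncard ∧ G.Adj u x ∧ G.Adj x y ∧ u ≠ y ∧
      (G.neighborSet x).ncard = 2 ∧ (G.neighborSet y).ncard = 2) :
    ¬ ∃ v1 v2 v3 v4 v5 : V,
      ([v1, v2, v3, v4, v5] : List V).Nodup ∧
      G.Adj v1 v2 ∧ G.Adj v2 v3 ∧ G.Adj v3 v4 ∧ G.Adj v4 v5 ∧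
      Odd (G.neighborSet v1).ncard ∧
      (G.neighborSet v2).ncard = 2 ∧
      (G.neighborSet v4).ncard = 2 ∧
      (G.neighborSet v5).ncard = 2 := by
  classical
  rintro ⟨v1, v2, v3, v4, v5, hnd, h12, h23, h34, h45, hodd1, hd2, hd4, hd5⟩
  have n12 : v1 ≠ v2 := by simp only [List.nodup_cons, List.mem_cons] at hnd; tauto
  have n13 : v1 ≠ v3 := by simp only [List.nodup_cons, List.mem_cons] at hnd; tauto
  have n14 : v1 ≠ v4 := by simp only [List.nodup_cons, List.mem_cons] at hnd; tauto
  have n15 : v1 ≠ v5 := by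
    simp only [List.nodup_cons, List.mem_cons, List.mem_singleton] at hnd; tauto
  have n23 : v2 ≠ v3 := by simp only [List.nodup_cons, List.mem_cons] at hnd; tauto
  have n24 : v2 ≠ v4 := by simp only [List.nodup_cons, List.mem_cons] at hnd; tauto
  have n25 : v2 ≠ v5 := by
    simp only [List.nodup_cons, List.mem_cons, List.mem_singleton] at hnd; tauto
  have n34 : v3 ≠ v4 := by simp only [List.nodup_cons, List.mem_cons] at hnd; tauto
  have n35 : v3 ≠ v5 := by
    simp only [List.nodup_cons, List.mem_cons, List.mem_singleton] at hnd; tauto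
  have n45 : v4 ≠ v5 := by
    simp only [List.nodup_cons, List.mem_cons, List.mem_singleton] at hnd; tauto
  -- neighborhood structure
  have hset2 : G.neighborSet v2 = {v1, v3} := set_pair _ _ _ h12.symm h23 n13 hd2
  have hN2 : ∀ y, G.Adj v2 y → y = v1 ∨ y = v3 := by
    intro y hy
    have hmem : y ∈ G.neighborSet v2 := hy
    rw [hset2] at hmem
    simpa using hmem
  have hset4 : G.neighborSet v4 = {v3, v5} := set_pair _ _ _ h34.symm h45 n35 hd4
  have hN4 : ∀ y, G.Adj v4 y → y = v3 ∨ y = v5 := by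
    intro y hy
    have hmem : y ∈ G.neighborSet v4 := hy
    rw [hset4] at hmem
    simpa using hmem
  obtain ⟨w, hw4, hset5⟩ : ∃ w, w ≠ v4 ∧ G.neighborSet v5 = {v4, w} := by
    obtain ⟨a, b, hab, hS⟩ := Set.ncard_eq_two.mp hd5
    have hv4m : v4 ∈ G.neighborSet v5 := h45.symm
    rw [hS] at hv4m
    rcases hv4m with h | h
    · subst h
      exact ⟨b, hab.symm, hS⟩
    · subst h
      exact ⟨a, hab, by rw [hS]; exact Set.pair_comm a v4⟩
  have hw5 : G.Adj v5 w := by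
    have hmem : w ∈ G.neighborSet v5 := by rw [hset5]; right; rfl
    exact hmem
  have hN5 : ∀ y, G.Adj v5 y → y = v4 ∨ y = w := by
    intro y hy
    have hmem : y ∈ G.neighborSet v5 := hy
    rw [hset5] at hmem
    simpa using hmem
  have hw2 : w ≠ v2 := by
    intro h
    subst h
    rcases hN2 v5 hw5.symm with h | h
    · exact n15 h.symm
    · exact n35 h.symm
  -- the smaller graph
  haveI : DecidablePred (fun x : V => x ≠ v4) := fun _ => Classical.dec _
  let H := pathH G v3 v4 v5 n35
  have hcard : Fintype.card {x : V // x ≠ v4} < Fintype.card V :=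
    Fintype.card_subtype_lt (x := v4) (by simp)
  obtain ⟨φ, hφ⟩ := hmin {x : V // x ≠ v4} H hcard
  have hadj_iff : ∀ a b : {x : V // x ≠ v4}, H.Adj a b ↔
      (G.Adj a.1 b.1 ∨ (a.1 = v3 ∧ b.1 = v5) ∨ (a.1 = v5 ∧ b.1 = v3)) :=
    fun a b => Iff.rfl
  let u1 : {x : V // x ≠ v4} := ⟨v1, n14⟩
  let u2 : {x : V // x ≠ v4} := ⟨v2, n24⟩
  let u3 : {x : V // x ≠ v4} := ⟨v3, n34⟩
  let u5 : {x : V // x ≠ v4} := ⟨v5, Ne.symm n45⟩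
  let uw : {x : V // x ≠ v4} := ⟨w, hw4⟩
  -- facts about φ
  have hH1 : φ u1 ≠ φ u3 := by
    refine two_nbrs H φ hφ u2 u1 u3 ((hadj_iff _ _).mpr (Or.inl h12.symm))
      ((hadj_iff _ _).mpr (Or.inl h23)) (fun h => n13 (congrArg Subtype.val h)) ?_
    intro y hy
    rcases (hadj_iff _ _).mp hy with h | ⟨h1, _⟩ | ⟨h1, _⟩
    · rcases hN2 y.1 h with h' | h'
      · exact Or.inl (Subtype.ext h')
      · exact Or.inr (Subtype.ext h')
    · exact absurd h1 n23
    · exact absurd h1 n25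
  have hH2 : φ u3 ≠ φ u5 :=
    hφ.1 u3 u5 ((hadj_iff _ _).mpr (Or.inr (Or.inl ⟨rfl, rfl⟩)))
  have hH3 : φ u5 ≠ φ uw := by
    by_cases hw3 : w = v3
    · have huw : uw = u3 := Subtype.ext hw3
      rw [huw]
      exact hH2.symm
    · exact hφ.1 u5 uw ((hadj_iff _ _).mpr (Or.inl hw5))
  -- the new color for v4
  obtain ⟨c4, hc43, hc45, hc4w⟩ := fin4_exists (φ u3) (φ u5) (φ uw)
  let base : V → Fin 4 := fun x => if h : x = v4 then c4 else φ ⟨x, h⟩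
  have hbase4 : base v4 = c4 := by simp [base]
  have hbase : ∀ x (h : x ≠ v4), base x = φ ⟨x, h⟩ := by
    intro x h
    simp [base, h]
  -- the color for v2, fixing the parity at v3
  obtain ⟨ca, cb, hab', hap, haq, hbp, hbq⟩ := fin4_two (φ u1) (φ u3) hH1
  obtain ⟨c2, hc21, hc23, hc2odd⟩ :
      ∃ c2 : Fin 4, c2 ≠ φ u1 ∧ c2 ≠ φ u3 ∧
        ∃ c : Fin 4, Odd {x : V | G.Adj v3 x ∧ Function.update base v2 c2 x = c}.ncard := by
    by_cases hcase :
        ∃ c : Fin 4, Odd {x : V | G.Adj v3 x ∧ Function.update base v2 cb x = c}.ncard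
    · exact ⟨cb, hbp, hbq, hcase⟩
    · push_neg at hcase
      refine ⟨ca, hap, haq, ca, ?_⟩
      have hnot : v2 ∉ {x : V | G.Adj v3 x ∧ Function.update base v2 cb x = ca} := by
        rintro ⟨-, h2⟩
        rw [Function.update_self] at h2
        exact hab' h2.symm
      have hkey : {x : V | G.Adj v3 x ∧ Function.update base v2 ca x = ca}
          = insert v2 {x : V | G.Adj v3 x ∧ Function.update base v2 cb x = ca} := by
        ext x
        simp only [Set.mem_setOf_eq, Set.mem_insert_iff]
        constructor
        · rintro ⟨h1, h2⟩
          by_cases hx : x = v2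
          · exact Or.inl hx
          · refine Or.inr ⟨h1, ?_⟩
            rw [Function.update_of_ne hx] at h2 ⊢
            exact h2
        · rintro (rfl | ⟨h1, h2⟩)
          · exact ⟨h23.symm, Function.update_self _ _ _⟩
          · have hx : x ≠ v2 := by
              rintro rfl
              rw [Function.update_self] at h2
              exact hab' h2.symm
            refine ⟨h1, ?_⟩
            rw [Function.update_of_ne hx] at h2 ⊢
            exact h2
      rw [hkey, Set.ncard_insert_of_notMem hnot]
      exact (Nat.not_odd_iff_even.mp (hcase ca)).add_one
  set φ' : V → Fin 4 := Function.update base v2 c2 with hφ'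
  have hp4 : φ' v4 = c4 := by
    rw [hφ', Function.update_of_ne (Ne.symm n24), hbase4]
  have hp2 : φ' v2 = c2 := by rw [hφ', Function.update_self]
  have hpx : ∀ x (h4 : x ≠ v4), x ≠ v2 → φ' x = φ ⟨x, h4⟩ := by
    intro x h4 h2
    rw [hφ', Function.update_of_ne h2, hbase x h4]
  -- properness
  have hproper : ∀ x y : V, G.Adj x y → φ' x ≠ φ' y := by
    have key4 : ∀ y, G.Adj v4 y → φ' v4 ≠ φ' y := by
      intro y hy
      rcases hN4 y hy with h | h <;> rw [h]
      · rw [hp4, hpx v3 n34 (Ne.symm n23)]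
        exact hc43
      · rw [hp4, hpx v5 (Ne.symm n45) (Ne.symm n25)]
        exact hc45
    have key2 : ∀ y, G.Adj v2 y → φ' v2 ≠ φ' y := by
      intro y hy
      rcases hN2 y hy with h | h <;> rw [h]
      · rw [hp2, hpx v1 n14 n12]
        exact hc21
      · rw [hp2, hpx v3 n34 (Ne.symm n23)]
        exact hc23
    intro x y hxy
    by_cases hx4 : x = v4
    · subst hx4; exact key4 y hxy
    by_cases hy4 : y = v4
    · subst hy4; exact (key4 x hxy.symm).symm
    by_cases hx2 : x = v2
    · subst hx2; exact key2 y hxy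
    by_cases hy2 : y = v2
    · subst hy2; exact (key2 x hxy.symm).symm
    rw [hpx x hx4 hx2, hpx y hy4 hy2]
    exact hφ.1 ⟨x, hx4⟩ ⟨y, hy4⟩ ((hadj_iff _ _).mpr (Or.inl hxy))
  -- oddness
  have hoddc : ∀ v : V, (∃ u, G.Adj v u) →
      ∃ c : Fin 4, Odd {u : V | G.Adj v u ∧ φ' u = c}.ncard := by
    intro v hv
    by_cases hv1 : v = v1
    · subst hv1
      exact odd_degree_exists G φ' _ hodd1
    by_cases hv2 : v = v2
    · subst hv2
      refine ⟨φ u1, ?_⟩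
      have hS : {u : V | G.Adj v u ∧ φ' u = φ u1} = {v1} := by
        ext x
        simp only [Set.mem_setOf_eq, Set.mem_singleton_iff]
        constructor
        · rintro ⟨h1, h2⟩
          rcases hN2 x h1 with h | h
          · exact h
          · exfalso
            rw [h, hpx v3 n34 (Ne.symm n23)] at h2
            exact hH1 h2.symm
        · intro hx
          rw [hx]
          exact ⟨h12.symm, hpx v1 n14 n12⟩
      rw [hS, Set.ncard_singleton]
      exact odd_one
    by_cases hv3 : v = v3
    · subst hv3
      exact hc2odd
    by_cases hv4 : v = v4
    · subst hv4
      refine ⟨φ u3, ?_⟩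
      have hS : {u : V | G.Adj v u ∧ φ' u = φ u3} = {v3} := by
        ext x
        simp only [Set.mem_setOf_eq, Set.mem_singleton_iff]
        constructor
        · rintro ⟨h1, h2⟩
          rcases hN4 x h1 with h | h
          · exact h
          · exfalso
            rw [h, hpx v5 (Ne.symm n45) (Ne.symm n25)] at h2
            exact hH2 h2.symm
        · intro hx
          rw [hx]
          exact ⟨h34.symm, hpx v3 n34 (Ne.symm n23)⟩
      rw [hS, Set.ncard_singleton]
      exact odd_one
    by_cases hv5 : v = v5
    · subst hv5
      refine ⟨c4, ?_⟩
      have hS : {u : V | G.Adj v u ∧ φ' u = c4} = {v4} := by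
        ext x
        simp only [Set.mem_setOf_eq, Set.mem_singleton_iff]
        constructor
        · rintro ⟨h1, h2⟩
          rcases hN5 x h1 with h | h
          · exact h
          · exfalso
            rw [h, hpx w hw4 hw2] at h2
            exact hc4w h2.symm
        · intro hx
          rw [hx]
          exact ⟨h45.symm, hp4⟩
      rw [hS, Set.ncard_singleton]
      exact odd_one
    -- generic vertex
    · have hnadj4 : ¬ G.Adj v v4 := by
        intro h
        rcases hN4 v h.symm with h' | h'
        · exact hv3 h'
        · exact hv5 h'
      have hnadj2 : ¬ G.Adj v v2 := by
        intro h
        rcases hN2 v h.symm with h' | h'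
        · exact hv1 h'
        · exact hv3 h'
      have hvne4 : v ≠ v4 := fun h => hv4 h
      have hA : ∀ y : {x : V // x ≠ v4}, H.Adj ⟨v, hvne4⟩ y ↔ G.Adj v y.1 := by
        intro y
        rw [hadj_iff]
        constructor
        · rintro (h | ⟨h1, -⟩ | ⟨h1, -⟩)
          · exact h
          · exact absurd h1 hv3
          · exact absurd h1 hv5
        · exact Or.inl
      have hC : ∀ y : {x : V // x ≠ v4}, G.Adj v y.1 → φ' y.1 = φ y := by
        intro y hy
        have hy2 : y.1 ≠ v2 := by
          intro h
          exact hnadj2 (h ▸ hy)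
        rw [hpx y.1 y.2 hy2]
      have hSu : ∀ x : V, G.Adj v x → ∃ y : {x : V // x ≠ v4}, y.1 = x := by
        intro x hx
        have hx4 : x ≠ v4 := by
          rintro rfl
          exact hnadj4 hx
        exact ⟨⟨x, hx4⟩, rfl⟩
      obtain ⟨z, hz⟩ := hv
      have hz4 : z ≠ v4 := by
        rintro rfl
        exact hnadj4 hz
      obtain ⟨c, hc⟩ := hφ.2 ⟨v, hvne4⟩ ⟨⟨z, hz4⟩, (hA ⟨z, hz4⟩).mpr hz⟩
      refine ⟨c, ?_⟩
      rw [transfer_ncard G H Subtype.val Subtype.val_injective φ φ' v ⟨v, hvne4⟩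
        hA hC hSu c]
      exact hc
  exact hno ⟨φ', hproper, hoddc⟩
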